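/- Fix n, ℓ ≥ 1 and let O be the ELU ontology {A ⊑ B₁ ⊔ B₂, ∃r.B₂ ⊑ ∃r.(B₁ ⊓ L), L ⊑ A₁ ⊓ Â₁ ⊓ ⋯ ⊓ Aₙ ⊓ Âₙ ⊓ ∃r₁.L ⊓ ∃r₂.L}. If O_T is any ℓ-bounded EL approximation of O (an EL ontology, possibly using fresh symbols, such that for all EL concepts C, D over sig(O) of depth ≤ ℓ, O ⊨ C ⊑ D iff O_T ⊨ C ⊑ D), then ||O_T|| ≥ tower(ℓ, n), where tower(0,n) = n and tower(k+1,n) = 2^tower(k,n). -/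

import Mathlib

namespace DL

/- Basic description-logic framework: concepts, interpretations, ontologies. -/

inductive Concept (Cn R : Type) : Type where
  | top  : Concept Cn R
  | bot  : Concept Cn R
  | name : Cn → Concept Cn R
  | neg  : Concept Cn R → Concept Cn R
  | conj : Concept Cn R → Concept Cn R → Concept Cn R
  | disj : Concept Cn R → Concept Cn R → Concept Cn R
  | ex   : R → Concept Cn R → Concept Cn R
  | all  : R → Concept Cn R → Concept Cn R
  deriving DecidableEq

namespace Concept
variable {Cn R : Type}

/-- `EL` concepts: only ⊤, concept names, ⊓ and ∃r.C. -/
def isEL : Concept Cn R → Prop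
  | top => True
  | bot => False
  | name _ => True
  | neg _ => False
  | conj c d => c.isEL ∧ d.isEL
  | disj _ _ => False
  | ex _ c => c.isEL
  | all _ _ => False

/-- `ELU` concepts: additionally allow ⊔. -/
def isELU : Concept Cn R → Prop
  | top => True
  | bot => False
  | name _ => True
  | neg _ => False
  | conj c d => c.isELU ∧ d.isELU
  | disj c d => c.isELU ∧ d.isELU
  | ex _ c => c.isELU
  | all _ _ => False

/-- `EL⊥` concepts. -/
def isELbot : Concept Cn R → Prop
  | top => True
  | bot => True
  | name _ => True
  | neg _ => False
  | conj c d => c.isELbot ∧ d.isELbot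
  | disj _ _ => False
  | ex _ c => c.isELbot
  | all _ _ => False

/-- `ELU⊥` concepts. -/
def isELUbot : Concept Cn R → Prop
  | top => True
  | bot => True
  | name _ => True
  | neg _ => False
  | conj c d => c.isELUbot ∧ d.isELUbot
  | disj c d => c.isELUbot ∧ d.isELUbot
  | ex _ c => c.isELUbot
  | all _ _ => False

/-- the nesting depth of ∃/∀ restrictions. -/
def depth : Concept Cn R → ℕ
  | top => 0
  | bot => 0
  | name _ => 0
  | neg c => c.depth
  | conj c d => max c.depth d.depth
  | disj c d => max c.depth d.depth
  | ex _ c => c.depth + 1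
  | all _ c => c.depth + 1

/-- size of a concept (occurrences of symbols). -/
def size : Concept Cn R → ℕ
  | top => 1
  | bot => 1
  | name _ => 1
  | neg c => c.size + 1
  | conj c d => c.size + d.size + 1
  | disj c d => c.size + d.size + 1
  | ex _ c => c.size + 2
  | all _ c => c.size + 2

/-- set of subconcepts. -/
def sub : Concept Cn R → Set (Concept Cn R)
  | top => {top}
  | bot => {bot}
  | name A => {name A}
  | neg c => insert (neg c) c.sub
  | conj c d => insert (conj c d) (c.sub ∪ d.sub)
  | disj c d => insert (disj c d) (c.sub ∪ d.sub)
  | ex r c => insert (ex r c) c.sub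
  | all r c => insert (all r c) c.sub

/-- concept names occurring in a concept. -/
def names : Concept Cn R → Set Cn
  | top => ∅
  | bot => ∅
  | name A => {A}
  | neg c => c.names
  | conj c d => c.names ∪ d.names
  | disj c d => c.names ∪ d.names
  | ex _ c => c.names
  | all _ c => c.names

/-- role names occurring in a concept. -/
def roles : Concept Cn R → Set R
  | top => ∅
  | bot => ∅
  | name _ => ∅
  | neg c => c.roles
  | conj c d => c.roles ∪ d.roles
  | disj c d => c.roles ∪ d.roles
  | ex r c => insert r c.roles
  | all r c => insert r c.roles

/-- top-level conjuncts of a concept. -/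
def tlConj : Concept Cn R → Set (Concept Cn R)
  | conj c d => c.tlConj ∪ d.tlConj
  | c => {c}

end Concept

/-- n-fold nesting of ∃r applied to a concept. -/
def exN {Cn R : Type} (r : R) : ℕ → Concept Cn R → Concept Cn R
  | 0, c => c
  | n + 1, c => Concept.ex r (exN r n c)

/-- An interpretation: a domain together with extensions of concept and role names. -/
structure Interp (Cn R : Type) : Type 1 where
  Dom : Type
  cI : Cn → Set Dom
  rI : R → Set (Dom × Dom)

/-- Semantics of concepts. -/
def Interp.interp {Cn R : Type} (I : Interp Cn R) : Concept Cn R → Set I.Dom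
  | .top => Set.univ
  | .bot => ∅
  | .name A => I.cI A
  | .neg c => (I.interp c)ᶜ
  | .conj c d => I.interp c ∩ I.interp d
  | .disj c d => I.interp c ∪ I.interp d
  | .ex r c => {x | ∃ y, (x, y) ∈ I.rI r ∧ y ∈ I.interp c}
  | .all r c => {x | ∀ y, (x, y) ∈ I.rI r → y ∈ I.interp c}

/-- An ontology: a set of concept inclusions `C ⊑ D`, coded as pairs `(C, D)`. -/
abbrev Ontology (Cn R : Type) := Set (Concept Cn R × Concept Cn R)

/-- `I` is a model of the ontology `O`. -/
def Interp.isModel {Cn R : Type} (I : Interp Cn R) (O : Ontology Cn R) : Prop :=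
  ∀ ci ∈ O, I.interp ci.1 ⊆ I.interp ci.2

/-- `O ⊨ c ⊑ d`. -/
def entails {Cn R : Type} (O : Ontology Cn R) (c d : Concept Cn R) : Prop :=
  ∀ I : Interp Cn R, I.isModel O → I.interp c ⊆ I.interp d

/-- logical equivalence (w.r.t. the empty ontology). -/
def lequiv {Cn R : Type} (c d : Concept Cn R) : Prop :=
  entails ∅ c d ∧ entails ∅ d c

/-- set of subconcepts of an ontology. -/
def subO {Cn R : Type} (O : Ontology Cn R) : Set (Concept Cn R) :=
  {F | ∃ ci ∈ O, F ∈ ci.1.sub ∪ ci.2.sub}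

/-- concept names of an ontology. -/
def sigC {Cn R : Type} (O : Ontology Cn R) : Set Cn :=
  {A | ∃ ci ∈ O, A ∈ ci.1.names ∪ ci.2.names}

/-- role names of an ontology. -/
def sigR {Cn R : Type} (O : Ontology Cn R) : Set R :=
  {r | ∃ ci ∈ O, r ∈ ci.1.roles ∪ ci.2.roles}


/- STATEMENT 17: non-elementary lower bound on the size of ℓ-bounded EL approximations
   of Oⁿ = {A ⊑ B₁ ⊔ B₂, ∃r.B₂ ⊑ ∃r.(B₁ ⊓ L),
            L ⊑ A₁ ⊓ Â₁ ⊓ ⋯ ⊓ Aₙ ⊓ Âₙ ⊓ ∃r₁.L ⊓ ∃r₂.L}. -/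

/-- tower of exponentials. -/
def tower : ℕ → ℕ → ℕ
  | 0, n => n
  | k + 1, n => 2 ^ tower k n

/-- conjunction of a list of concepts. -/
def bigConj {Cn R : Type} (l : List (Concept Cn R)) : Concept Cn R :=
  l.foldr Concept.conj Concept.top

/-- renaming of concept and role names. -/
def Concept.rename {Cn Cn' R R' : Type} (f : Cn → Cn') (g : R → R') :
    Concept Cn R → Concept Cn' R'
  | .top => .top
  | .bot => .bot
  | .name A => .name (f A)
  | .neg c => .neg (c.rename f g)
  | .conj c d => .conj (c.rename f g) (d.rename f g)
  | .disj c d => .disj (c.rename f g) (d.rename f g)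
  | .ex r c => .ex (g r) (c.rename f g)
  | .all r c => .all (g r) (c.rename f g)

-- concept names: A = 0, B₁ = 1, B₂ = 2, L = 3, Aᵢ = 4 + 2i, Âᵢ = 5 + 2i (0 ≤ i < n);
-- role names: r = 0, r₁ = 1, r₂ = 2
def cL : Concept ℕ ℕ := .name 3

/-- the source ontology Oⁿ of Proposition 3. -/
def O₁₇ (n : ℕ) : Ontology ℕ ℕ :=
  {(.name 0, .disj (.name 1) (.name 2)),
   (.ex 0 (.name 2), .ex 0 (.conj (.name 1) cL)),
   (cL, .conj
      (bigConj ((List.range n).flatMap fun i => [.name (4 + 2 * i), .name (5 + 2 * i)]))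
      (.conj (.ex 1 cL) (.ex 2 cL)))}

/-- the signature of Oⁿ. -/
def srcNames (n : ℕ) : Set ℕ := {m | m < 4 + 2 * n}
def srcRoles : Set ℕ := {0, 1, 2}

/-! ### Auxiliary lemmas -/

section Basic
variable {Cn R : Type}

theorem entails_refl (O : Ontology Cn R) (c : Concept Cn R) : entails O c c :=
  fun _ _ => subset_rfl

theorem entails_trans {O : Ontology Cn R} {c d e : Concept Cn R}
    (h1 : entails O c d) (h2 : entails O d e) : entails O c e :=
  fun I hI => (h1 I hI).trans (h2 I hI)

theorem entails_conj_intro {O : Ontology Cn R} {c d e : Concept Cn R}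
    (h1 : entails O c d) (h2 : entails O c e) : entails O c (.conj d e) :=
  fun I hI x hx => ⟨h1 I hI hx, h2 I hI hx⟩

theorem entails_conj_elim_l (O : Ontology Cn R) (d e : Concept Cn R) :
    entails O (.conj d e) d := fun _ _ _ hx => hx.1

theorem entails_conj_elim_r (O : Ontology Cn R) (d e : Concept Cn R) :
    entails O (.conj d e) e := fun _ _ _ hx => hx.2

theorem entails_ex_mono {O : Ontology Cn R} {c d : Concept Cn R} (r : R)
    (h : entails O c d) : entails O (.ex r c) (.ex r d) := by
  intro I hI x hx
  obtain ⟨y, hy1, hy2⟩ := hx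
  exact ⟨y, hy1, h I hI hy2⟩

theorem interp_bigConj (I : Interp Cn R) (l : List (Concept Cn R)) (x : I.Dom) :
    x ∈ I.interp (bigConj l) ↔ ∀ c ∈ l, x ∈ I.interp c := by
  induction l with
  | nil => simp [bigConj, Interp.interp]
  | cons a t ih =>
    simp only [bigConj, List.foldr_cons] at ih ⊢
    constructor
    · rintro ⟨h1, h2⟩ c hc
      rcases List.mem_cons.mp hc with rfl | hc
      · exact h1
      · exact ih.1 h2 c hc
    · intro h
      exact ⟨h a (List.mem_cons_self), ih.2 fun c hc => h c (List.mem_cons_of_mem _ hc)⟩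

theorem mem_tlConj_bigConj {l : List (Concept Cn R)} {c : Concept Cn R} (h : c ∈ l) :
    c.tlConj ⊆ (bigConj l).tlConj := by
  induction l with
  | nil => simp at h
  | cons a t ih =>
    rcases List.mem_cons.mp h with rfl | h
    · exact fun d hd => Or.inl hd
    · exact fun d hd => Or.inr (ih h hd)

theorem tlConj_bigConj_sub {l : List (Concept Cn R)} {d : Concept Cn R}
    (h : d ∈ (bigConj l).tlConj) : d = .top ∨ ∃ c ∈ l, d ∈ c.tlConj := by
  induction l with
  | nil => exact Or.inl h
  | cons a t ih =>
    rcases h with h | h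
    · exact Or.inr ⟨a, List.mem_cons_self, h⟩
    · rcases ih h with h | ⟨c, hc, hdc⟩
      · exact Or.inl h
      · exact Or.inr ⟨c, List.mem_cons_of_mem _ hc, hdc⟩

end Basic
section WModel

/-- family of countermodels on the source side. -/
def Wmod (c0 c1 c2 : Set (Concept ℕ ℕ)) (r0 : Set (Concept ℕ ℕ × Concept ℕ ℕ)) :
    Interp ℕ ℕ where
  Dom := Concept ℕ ℕ
  cI m := if m = 0 then c0 else if m = 1 then c1 else if m = 2 then c2 else
    if m = 3 then ∅ else {C | .name m ∈ C.tlConj}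
  rI s := if s = 0 then r0 else {p | .ex s p.2 ∈ p.1.tlConj}

variable {c0 c1 c2 : Set (Concept ℕ ℕ)} {r0 : Set (Concept ℕ ℕ × Concept ℕ ℕ)}

theorem Wmod_cI_ge4 {m : ℕ} (h : 4 ≤ m) :
    (Wmod c0 c1 c2 r0).cI m = {C | .name m ∈ C.tlConj} := by
  simp only [Wmod]
  rw [if_neg (by omega), if_neg (by omega), if_neg (by omega), if_neg (by omega)]

theorem Wmod_rI_ne0 {s : ℕ} (h : s ≠ 0) :
    (Wmod c0 c1 c2 r0).rI s = {p | .ex s p.2 ∈ p.1.tlConj} := by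
  simp only [Wmod]
  rw [if_neg h]

theorem Wmod_isModel (n : ℕ) (h01 : c0 ⊆ c1 ∪ c2) (h2 : r0 = ∅ ∨ c2 = ∅) :
    (Wmod c0 c1 c2 r0).isModel (O₁₇ n) := by
  intro ci hci
  simp only [O₁₇, Set.mem_insert_iff, Set.mem_singleton_iff] at hci
  rcases hci with rfl | rfl | rfl
  · intro x hx
    have hx0 : x ∈ c0 := hx
    rcases h01 hx0 with h | h
    · exact Or.inl h
    · exact Or.inr h
  · intro x hx
    obtain ⟨y, hy1, hy2⟩ := hx
    exfalso
    have hy1' : (x, y) ∈ r0 := hy1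
    have hy2' : y ∈ c2 := hy2
    rcases h2 with h | h
    · rw [h] at hy1'; exact hy1'
    · rw [h] at hy2'; exact hy2'
  · intro x hx
    have hx' : x ∈ (∅ : Set (Concept ℕ ℕ)) := hx
    exact absurd hx' (Set.notMem_empty x)

end WModel
section Omega

/-- level-0 concepts: one per subset of `range n`. -/
def omega0 (n : ℕ) (S : Finset ℕ) : Concept ℕ ℕ :=
  bigConj ((List.range n).map fun i => if i ∈ S then .name (4 + 2 * i) else .name (5 + 2 * i))

/-- level-(k+1) concepts: one per subset of the previous level. -/
def omegaS (l : List (Concept ℕ ℕ)) (S : Finset (Concept ℕ ℕ)) : Concept ℕ ℕ :=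
  bigConj (l.map fun X => if X ∈ S then .ex 1 X else .ex 2 X)

/-- the families Ω of pairwise incomparable concepts. -/
noncomputable def OmegaF (n : ℕ) : ℕ → Finset (Concept ℕ ℕ)
  | 0 => (Finset.range n).powerset.image (omega0 n)
  | k + 1 => (OmegaF n k).powerset.image (omegaS (OmegaF n k).toList)

theorem OmegaF_zero (n : ℕ) : OmegaF n 0 = (Finset.range n).powerset.image (omega0 n) := by
  rw [OmegaF]

theorem OmegaF_succ (n k : ℕ) :
    OmegaF n (k + 1) = (OmegaF n k).powerset.image (omegaS (OmegaF n k).toList) := by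
  rw [OmegaF]

theorem omega_W1 (n : ℕ) : ∀ k, ∀ E ∈ OmegaF n k,
    ∀ c0 c1 c2 r0, E ∈ (Wmod c0 c1 c2 r0).interp E := by
  intro k
  induction k with
  | zero =>
    intro E hE c0 c1 c2 r0
    rw [OmegaF_zero] at hE
    rw [Finset.mem_image] at hE
    obtain ⟨S, _, rfl⟩ := hE
    rw [omega0]; apply (interp_bigConj (Wmod c0 c1 c2 r0) _ _).mpr
    intro c hc
    simp only [List.mem_map, List.mem_range] at hc
    obtain ⟨i, hi, rfl⟩ := hc
    have key : ∀ m : ℕ, 4 ≤ m →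
        ((if i ∈ S then Concept.name (4 + 2 * i) else Concept.name (5 + 2 * i) : Concept ℕ ℕ)) = .name m →
        omega0 n S ∈ (Wmod c0 c1 c2 r0).interp (.name m) := by
      intro m hm heq
      have : omega0 n S ∈ (Wmod c0 c1 c2 r0).cI m := by
        rw [Wmod_cI_ge4 hm]
        have : Concept.name m ∈ (Concept.name m : Concept ℕ ℕ).tlConj := rfl
        refine mem_tlConj_bigConj ?_ this
        rw [← heq]
        exact List.mem_map.mpr ⟨i, List.mem_range.mpr hi, rfl⟩
      exact this
    by_cases hiS : i ∈ S
    · rw [if_pos hiS]; exact key _ (by omega) (by rw [if_pos hiS])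
    · rw [if_neg hiS]; exact key _ (by omega) (by rw [if_neg hiS])
  | succ k ih =>
    intro E hE c0 c1 c2 r0
    rw [OmegaF_succ, Finset.mem_image] at hE
    obtain ⟨S, _, rfl⟩ := hE
    rw [omegaS]; apply (interp_bigConj (Wmod c0 c1 c2 r0) _ _).mpr
    intro c hc
    simp only [List.mem_map, Finset.mem_toList] at hc
    obtain ⟨X, hX, rfl⟩ := hc
    have key : ∀ s : ℕ, s ≠ 0 →
        (if X ∈ S then Concept.ex 1 X else Concept.ex 2 X) = .ex s X →
        omegaS (OmegaF n k).toList S ∈ (Wmod c0 c1 c2 r0).interp (.ex s X) := by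
      intro s hs heq
      refine ⟨X, ?_, ih X hX c0 c1 c2 r0⟩
      show (_, X) ∈ (Wmod c0 c1 c2 r0).rI s
      rw [Wmod_rI_ne0 hs]
      show Concept.ex s X ∈ (omegaS (OmegaF n k).toList S).tlConj
      have : Concept.ex s X ∈ (Concept.ex s X : Concept ℕ ℕ).tlConj := rfl
      refine mem_tlConj_bigConj ?_ this
      rw [← heq]
      exact List.mem_map.mpr ⟨X, Finset.mem_toList.mpr hX, rfl⟩
    by_cases hXS : X ∈ S
    · rw [if_pos hXS]; exact key 1 (by omega) (by rw [if_pos hXS])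
    · rw [if_neg hXS]; exact key 2 (by omega) (by rw [if_neg hXS])

end Omega
section Omega2
variable {c0 c1 c2 : Set (Concept ℕ ℕ)} {r0 : Set (Concept ℕ ℕ × Concept ℕ ℕ)}

theorem omega_core0 {n : ℕ} {S T : Finset ℕ}
    (hS : S ⊆ Finset.range n) (hT : T ⊆ Finset.range n)
    (h : omega0 n S ∈ (Wmod c0 c1 c2 r0).interp (omega0 n T)) : S = T := by
  rw [omega0] at h; replace h := (interp_bigConj (Wmod c0 c1 c2 r0) _ _).mp h
  have main : ∀ i < n, (i ∈ T → i ∈ S) ∧ (i ∉ T → i ∉ S) := by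
    intro i hi
    have key : ∀ m : ℕ, 4 ≤ m → omega0 n S ∈ (Wmod c0 c1 c2 r0).interp (.name m) →
        ∃ j, j < n ∧ ((j ∈ S ∧ m = 4 + 2 * j) ∨ (j ∉ S ∧ m = 5 + 2 * j)) := by
      intro m hm hmem
      have : omega0 n S ∈ (Wmod c0 c1 c2 r0).cI m := hmem
      rw [Wmod_cI_ge4 hm] at this
      have h2 := tlConj_bigConj_sub this
      rcases h2 with h2 | ⟨c, hc, hdc⟩
      · exact absurd h2 (by simp)
      · simp only [List.mem_map, List.mem_range] at hc
        obtain ⟨j, hj, rfl⟩ := hc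
        by_cases hjS : j ∈ S
        · rw [if_pos hjS] at hdc
          have : (Concept.name m : Concept ℕ ℕ) = .name (4 + 2 * j) := hdc
          exact ⟨j, hj, Or.inl ⟨hjS, Concept.name.inj this⟩⟩
        · rw [if_neg hjS] at hdc
          have : (Concept.name m : Concept ℕ ℕ) = .name (5 + 2 * j) := hdc
          exact ⟨j, hj, Or.inr ⟨hjS, Concept.name.inj this⟩⟩
    have hmemT := h _ (List.mem_map.mpr ⟨i, List.mem_range.mpr hi, rfl⟩)
    constructor
    · intro hiT
      rw [if_pos hiT] at hmemT
      obtain ⟨j, hj, hcase⟩ := key _ (by omega) hmemT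
      rcases hcase with ⟨hjS, heq⟩ | ⟨hjS, heq⟩
      · have : j = i := by omega
        exact this ▸ hjS
      · omega
    · intro hiT
      rw [if_neg hiT] at hmemT
      obtain ⟨j, hj, hcase⟩ := key _ (by omega) hmemT
      rcases hcase with ⟨hjS, heq⟩ | ⟨hjS, heq⟩
      · omega
      · have : j = i := by omega
        exact this ▸ hjS
  apply Finset.ext
  intro i
  constructor
  · intro hiS
    by_contra hiT
    exact (main i (Finset.mem_range.mp (hS hiS))).2 hiT hiS
  · intro hiT
    exact (main i (Finset.mem_range.mp (hT hiT))).1 hiT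

theorem omega_coreS {n k : ℕ}
    (IH : ∀ E ∈ OmegaF n k, ∀ E' ∈ OmegaF n k,
      E ∈ (Wmod c0 c1 c2 r0).interp E' → E = E')
    {S T : Finset (Concept ℕ ℕ)} (hS : S ⊆ OmegaF n k) (hT : T ⊆ OmegaF n k)
    (h : omegaS (OmegaF n k).toList S ∈
      (Wmod c0 c1 c2 r0).interp (omegaS (OmegaF n k).toList T)) : S = T := by
  rw [omegaS] at h; replace h := (interp_bigConj (Wmod c0 c1 c2 r0) _ _).mp h
  -- analysis of successors of E_S
  have key : ∀ s : ℕ, s = 1 ∨ s = 2 → ∀ Y : Concept ℕ ℕ,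
      (omegaS (OmegaF n k).toList S, Y) ∈ (Wmod c0 c1 c2 r0).rI s →
      Y ∈ OmegaF n k ∧ ((s = 1 → Y ∈ S) ∧ (s = 2 → Y ∉ S)) := by
    intro s hs Y hY
    rw [Wmod_rI_ne0 (by omega)] at hY
    have hY' : Concept.ex s Y ∈ (omegaS (OmegaF n k).toList S).tlConj := hY
    rw [omegaS] at hY'
    rcases tlConj_bigConj_sub hY' with h2 | ⟨c, hc, hdc⟩
    · exact absurd h2 (by simp)
    · simp only [List.mem_map, Finset.mem_toList] at hc
      obtain ⟨X, hX, rfl⟩ := hc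
      by_cases hXS : X ∈ S
      · rw [if_pos hXS] at hdc
        have : (Concept.ex s Y : Concept ℕ ℕ) = .ex 1 X := hdc
        have h1 : s = 1 ∧ Y = X := by
          have := Concept.ex.injEq s Y 1 X ▸ this
          exact ⟨this.1, this.2⟩
        refine ⟨h1.2 ▸ hX, fun _ => h1.2 ▸ hXS, fun hs2 => absurd h1.1 (by omega)⟩
      · rw [if_neg hXS] at hdc
        have : (Concept.ex s Y : Concept ℕ ℕ) = .ex 2 X := hdc
        have h1 : s = 2 ∧ Y = X := by
          have := Concept.ex.injEq s Y 2 X ▸ this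
          exact ⟨this.1, this.2⟩
        refine ⟨h1.2 ▸ hX, fun hs1 => absurd h1.1 (by omega), fun _ => h1.2 ▸ hXS⟩
  have main : ∀ X ∈ OmegaF n k, (X ∈ T → X ∈ S) ∧ (X ∉ T → X ∉ S) := by
    intro X hX
    have hmemT := h _ (List.mem_map.mpr ⟨X, Finset.mem_toList.mpr hX, rfl⟩)
    constructor
    · intro hXT
      rw [if_pos hXT] at hmemT
      obtain ⟨Y, hY1, hY2⟩ := hmemT
      obtain ⟨hYk, hY1', _⟩ := key 1 (Or.inl rfl) Y hY1
      have : Y = X := IH Y hYk X hX hY2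
      exact this ▸ (hY1' rfl)
    · intro hXT
      rw [if_neg hXT] at hmemT
      obtain ⟨Y, hY1, hY2⟩ := hmemT
      obtain ⟨hYk, _, hY2'⟩ := key 2 (Or.inr rfl) Y hY1
      have : Y = X := IH Y hYk X hX hY2
      exact this ▸ (hY2' rfl)
  apply Finset.ext
  intro X
  constructor
  · intro hXS
    by_contra hXT
    exact (main X (hS hXS)).2 hXT hXS
  · intro hXT
    exact (main X (hT hXT)).1 hXT

theorem omega_W2 (n : ℕ) : ∀ k, ∀ E ∈ OmegaF n k, ∀ E' ∈ OmegaF n k,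
    ∀ (c0 c1 c2 : Set (Concept ℕ ℕ)) (r0 : Set (Concept ℕ ℕ × Concept ℕ ℕ)),
    E ∈ (Wmod c0 c1 c2 r0).interp E' → E = E' := by
  intro k
  induction k with
  | zero =>
    intro E hE E' hE' c0 c1 c2 r0 h
    rw [OmegaF_zero, Finset.mem_image] at hE hE'
    obtain ⟨S, hSmem, rfl⟩ := hE
    obtain ⟨T, hTmem, rfl⟩ := hE'
    rw [omega_core0 (Finset.mem_powerset.mp hSmem) (Finset.mem_powerset.mp hTmem) h]
  | succ k ih =>
    intro E hE E' hE' c0 c1 c2 r0 h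
    rw [OmegaF_succ, Finset.mem_image] at hE hE'
    obtain ⟨S, hSmem, rfl⟩ := hE
    obtain ⟨T, hTmem, rfl⟩ := hE'
    rw [omega_coreS (fun E hE E' hE' => ih E hE E' hE' c0 c1 c2 r0)
      (Finset.mem_powerset.mp hSmem) (Finset.mem_powerset.mp hTmem) h]

theorem omega_card (n : ℕ) : ∀ k, (OmegaF n k).card = tower (k + 1) n := by
  intro k
  induction k with
  | zero =>
    rw [OmegaF_zero]
    rw [Finset.card_image_of_injOn, Finset.card_powerset, Finset.card_range]
    · rfl
    · intro S hS T hT hST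
      have h1 : omega0 n S ∈ (Wmod ∅ ∅ ∅ ∅).interp (omega0 n T) := by
        rw [hST]
        exact omega_W1 n 0 (omega0 n T)
          (by rw [OmegaF_zero]; exact Finset.mem_image_of_mem _ hT) ∅ ∅ ∅ ∅
      exact omega_core0 (Finset.mem_powerset.mp hS) (Finset.mem_powerset.mp hT) h1
  | succ k ih =>
    rw [OmegaF_succ]
    rw [Finset.card_image_of_injOn, Finset.card_powerset, ih]
    · rfl
    · intro S hS T hT hST
      have h1 : omegaS (OmegaF n k).toList S ∈
          (Wmod ∅ ∅ ∅ ∅).interp (omegaS (OmegaF n k).toList T) := by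
        rw [hST]
        exact omega_W1 n (k+1) (omegaS (OmegaF n k).toList T)
          (by rw [OmegaF_succ]; exact Finset.mem_image_of_mem _ hT) ∅ ∅ ∅ ∅
      exact omega_coreS (fun E hE E' hE' => omega_W2 n k E hE E' hE' ∅ ∅ ∅ ∅)
        (Finset.mem_powerset.mp hS) (Finset.mem_powerset.mp hT) h1

end Omega2
section Omega3
variable {Cn R : Type}

theorem isEL_bigConj {l : List (Concept Cn R)} (h : ∀ c ∈ l, c.isEL) :
    (bigConj l).isEL := by
  induction l with
  | nil => trivial
  | cons a t ih =>
    exact ⟨h a (List.mem_cons_self), ih fun c hc => h c (List.mem_cons_of_mem _ hc)⟩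

theorem depth_bigConj_le {l : List (Concept Cn R)} {k : ℕ} (h : ∀ c ∈ l, c.depth ≤ k) :
    (bigConj l).depth ≤ k := by
  induction l with
  | nil => exact Nat.zero_le k
  | cons a t ih =>
    have : (bigConj (a :: t)).depth = max a.depth (bigConj t).depth := rfl
    rw [this]
    exact max_le (h a (List.mem_cons_self)) (ih fun c hc => h c (List.mem_cons_of_mem _ hc))

theorem names_bigConj {l : List (Concept Cn R)} {A : Cn} (h : A ∈ (bigConj l).names) :
    ∃ c ∈ l, A ∈ c.names := by
  induction l with
  | nil => exact absurd h (by simp [bigConj, Concept.names])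
  | cons a t ih =>
    rcases h with h | h
    · exact ⟨a, List.mem_cons_self, h⟩
    · obtain ⟨c, hc, hAc⟩ := ih h
      exact ⟨c, List.mem_cons_of_mem _ hc, hAc⟩

theorem roles_bigConj {l : List (Concept Cn R)} {s : R} (h : s ∈ (bigConj l).roles) :
    ∃ c ∈ l, s ∈ c.roles := by
  induction l with
  | nil => exact absurd h (by simp [bigConj, Concept.roles])
  | cons a t ih =>
    rcases h with h | h
    · exact ⟨a, List.mem_cons_self, h⟩
    · obtain ⟨c, hc, hsc⟩ := ih h
      exact ⟨c, List.mem_cons_of_mem _ hc, hsc⟩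

theorem omega_conjuncts {n k : ℕ} {E : Concept ℕ ℕ} (hE : E ∈ OmegaF n (k + 1)) :
    ∃ S : Finset (Concept ℕ ℕ), S ⊆ OmegaF n k ∧ E = omegaS (OmegaF n k).toList S := by
  rw [OmegaF_succ, Finset.mem_image] at hE
  obtain ⟨S, hS, rfl⟩ := hE
  exact ⟨S, Finset.mem_powerset.mp hS, rfl⟩

theorem omega_isEL (n : ℕ) : ∀ k, ∀ E ∈ OmegaF n k, E.isEL := by
  intro k
  induction k with
  | zero =>
    intro E hE
    rw [OmegaF_zero, Finset.mem_image] at hE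
    obtain ⟨S, _, rfl⟩ := hE
    apply isEL_bigConj
    intro c hc
    simp only [List.mem_map] at hc
    obtain ⟨i, _, rfl⟩ := hc
    by_cases hiS : i ∈ S
    · rw [if_pos hiS]; trivial
    · rw [if_neg hiS]; trivial
  | succ k ih =>
    intro E hE
    obtain ⟨S, hS, rfl⟩ := omega_conjuncts hE
    apply isEL_bigConj
    intro c hc
    simp only [List.mem_map, Finset.mem_toList] at hc
    obtain ⟨X, hX, rfl⟩ := hc
    by_cases hXS : X ∈ S
    · rw [if_pos hXS]; exact ih X hX
    · rw [if_neg hXS]; exact ih X hX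

theorem omega_depth (n : ℕ) : ∀ k, ∀ E ∈ OmegaF n k, E.depth ≤ k := by
  intro k
  induction k with
  | zero =>
    intro E hE
    rw [OmegaF_zero, Finset.mem_image] at hE
    obtain ⟨S, _, rfl⟩ := hE
    apply depth_bigConj_le
    intro c hc
    simp only [List.mem_map] at hc
    obtain ⟨i, _, rfl⟩ := hc
    by_cases hiS : i ∈ S
    · rw [if_pos hiS]; exact Nat.le_refl 0
    · rw [if_neg hiS]; exact Nat.le_refl 0
  | succ k ih =>
    intro E hE
    obtain ⟨S, hS, rfl⟩ := omega_conjuncts hE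
    apply depth_bigConj_le
    intro c hc
    simp only [List.mem_map, Finset.mem_toList] at hc
    obtain ⟨X, hX, rfl⟩ := hc
    by_cases hXS : X ∈ S
    · rw [if_pos hXS]
      exact Nat.succ_le_succ (ih X hX)
    · rw [if_neg hXS]
      exact Nat.succ_le_succ (ih X hX)

theorem omega_names (n : ℕ) : ∀ k, ∀ E ∈ OmegaF n k, ∀ A ∈ E.names,
    4 ≤ A ∧ A < 4 + 2 * n := by
  intro k
  induction k with
  | zero =>
    intro E hE A hA
    rw [OmegaF_zero, Finset.mem_image] at hE
    obtain ⟨S, _, rfl⟩ := hE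
    obtain ⟨c, hc, hAc⟩ := names_bigConj hA
    simp only [List.mem_map, List.mem_range] at hc
    obtain ⟨i, hi, rfl⟩ := hc
    by_cases hiS : i ∈ S
    · rw [if_pos hiS] at hAc
      have : A = 4 + 2 * i := hAc
      omega
    · rw [if_neg hiS] at hAc
      have : A = 5 + 2 * i := hAc
      omega
  | succ k ih =>
    intro E hE A hA
    obtain ⟨S, hS, rfl⟩ := omega_conjuncts hE
    obtain ⟨c, hc, hAc⟩ := names_bigConj hA
    simp only [List.mem_map, Finset.mem_toList] at hc
    obtain ⟨X, hX, rfl⟩ := hc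
    by_cases hXS : X ∈ S
    · rw [if_pos hXS] at hAc
      exact ih X hX A hAc
    · rw [if_neg hXS] at hAc
      exact ih X hX A hAc

theorem omega_roles (n : ℕ) : ∀ k, ∀ E ∈ OmegaF n k, ∀ s ∈ E.roles,
    s = 1 ∨ s = 2 := by
  intro k
  induction k with
  | zero =>
    intro E hE s hs
    rw [OmegaF_zero, Finset.mem_image] at hE
    obtain ⟨S, _, rfl⟩ := hE
    obtain ⟨c, hc, hsc⟩ := roles_bigConj hs
    simp only [List.mem_map, List.mem_range] at hc
    obtain ⟨i, hi, rfl⟩ := hc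
    by_cases hiS : i ∈ S
    · rw [if_pos hiS] at hsc
      exact absurd hsc (by simp [Concept.roles])
    · rw [if_neg hiS] at hsc
      exact absurd hsc (by simp [Concept.roles])
  | succ k ih =>
    intro E hE s hs
    obtain ⟨S, hS, rfl⟩ := omega_conjuncts hE
    obtain ⟨c, hc, hsc⟩ := roles_bigConj hs
    simp only [List.mem_map, Finset.mem_toList] at hc
    obtain ⟨X, hX, rfl⟩ := hc
    by_cases hXS : X ∈ S
    · rw [if_pos hXS] at hsc
      rcases hsc with h | h
      · exact Or.inl h
      · exact ih X hX s h
    · rw [if_neg hXS] at hsc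
      rcases hsc with h | h
      · exact Or.inr h
      · exact ih X hX s h

end Omega3
section Src

theorem mem_O17_1 (n : ℕ) :
    ((.name 0, .disj (.name 1) (.name 2)) : Concept ℕ ℕ × Concept ℕ ℕ) ∈ O₁₇ n := by
  simp [O₁₇]

theorem mem_O17_2 (n : ℕ) :
    ((.ex 0 (.name 2), .ex 0 (.conj (.name 1) cL)) : Concept ℕ ℕ × Concept ℕ ℕ) ∈ O₁₇ n := by
  simp [O₁₇]

theorem mem_O17_3 (n : ℕ) :
    ((cL, .conj
      (bigConj ((List.range n).flatMap fun i => [.name (4 + 2 * i), .name (5 + 2 * i)]))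
      (.conj (.ex 1 cL) (.ex 2 cL))) : Concept ℕ ℕ × Concept ℕ ℕ) ∈ O₁₇ n := by
  simp [O₁₇]

/-- in every model of `O₁₇ n`, every point in `L` satisfies every concept in `Ω`. -/
theorem omega_L (n : ℕ) : ∀ k, ∀ E ∈ OmegaF n k, ∀ I : Interp ℕ ℕ, I.isModel (O₁₇ n) →
    I.interp cL ⊆ I.interp E := by
  intro k
  induction k with
  | zero =>
    intro E hE I hI z hz
    have h3 := hI _ (mem_O17_3 n) hz
    have hA : z ∈ I.interp (bigConj ((List.range n).flatMap
        fun i => [.name (4 + 2 * i), .name (5 + 2 * i)])) := h3.1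
    rw [interp_bigConj] at hA
    rw [OmegaF_zero, Finset.mem_image] at hE
    obtain ⟨S, _, rfl⟩ := hE
    rw [omega0, interp_bigConj]
    intro c hc
    simp only [List.mem_map, List.mem_range] at hc
    obtain ⟨i, hi, rfl⟩ := hc
    by_cases hiS : i ∈ S
    · rw [if_pos hiS]
      refine hA _ (List.mem_flatMap.mpr ⟨i, List.mem_range.mpr hi, ?_⟩)
      simp
    · rw [if_neg hiS]
      refine hA _ (List.mem_flatMap.mpr ⟨i, List.mem_range.mpr hi, ?_⟩)
      simp
  | succ k ih =>
    intro E hE I hI z hz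
    have h3 := hI _ (mem_O17_3 n) hz
    have hr1 : z ∈ I.interp (.ex 1 cL) := h3.2.1
    have hr2 : z ∈ I.interp (.ex 2 cL) := h3.2.2
    obtain ⟨S, hS, rfl⟩ := omega_conjuncts hE
    rw [omegaS, interp_bigConj]
    intro c hc
    simp only [List.mem_map, Finset.mem_toList] at hc
    obtain ⟨X, hX, rfl⟩ := hc
    by_cases hXS : X ∈ S
    · rw [if_pos hXS]
      obtain ⟨y, hy1, hy2⟩ := hr1
      exact ⟨y, hy1, ih X hX I hI hy2⟩
    · rw [if_neg hXS]
      obtain ⟨y, hy1, hy2⟩ := hr2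
      exact ⟨y, hy1, ih X hX I hI hy2⟩

/-- positive source entailment: `O ⊨ ∃r.(A ⊓ E) ⊑ ∃r.(B₁ ⊓ E)`. -/
theorem src_pos (n k : ℕ) (E : Concept ℕ ℕ) (hE : E ∈ OmegaF n k) :
    entails (O₁₇ n) (.ex 0 (.conj (.name 0) E)) (.ex 0 (.conj (.name 1) E)) := by
  intro I hI x hx
  obtain ⟨y, hy1, hy2A, hy2E⟩ := hx
  have hdisj := hI _ (mem_O17_1 n) hy2A
  rcases hdisj with hB1 | hB2
  · exact ⟨y, hy1, hB1, hy2E⟩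
  · have hx2 : x ∈ I.interp (.ex 0 (.name 2)) := ⟨y, hy1, hB2⟩
    have hx2' := hI _ (mem_O17_2 n) hx2
    obtain ⟨z, hz1, hzB1, hzL⟩ := hx2'
    exact ⟨z, hz1, hzB1, omega_L n k E hE I hI hzL⟩

/-- `O ⊭ A ⊓ E ⊑ B₁`. -/
theorem src_negB (n k : ℕ) (E : Concept ℕ ℕ) (hE : E ∈ OmegaF n k) :
    ¬ entails (O₁₇ n) (.conj (.name 0) E) (.name 1) := by
  intro h
  have hmod : (Wmod Set.univ ∅ Set.univ ∅).isModel (O₁₇ n) :=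
    Wmod_isModel n (fun x _ => Or.inr (Set.mem_univ x)) (Or.inl rfl)
  have hEmem : E ∈ (Wmod Set.univ ∅ Set.univ ∅).interp (.conj (.name 0) E) :=
    ⟨Set.mem_univ E, omega_W1 n k E hE _ _ _ _⟩
  have := h _ hmod hEmem
  exact this

/-- `O ⊭ ∃r.(A ⊓ E) ⊑ ∃r.(B₁ ⊓ E')` for distinct `E, E' ∈ Ω`. -/
theorem src_negE (n k : ℕ) (E E' : Concept ℕ ℕ) (hE : E ∈ OmegaF n k)
    (hE' : E' ∈ OmegaF n k) (hne : E ≠ E') :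
    ¬ entails (O₁₇ n) (.ex 0 (.conj (.name 0) E)) (.ex 0 (.conj (.name 1) E')) := by
  intro h
  have hmod : (Wmod Set.univ Set.univ ∅ {p | p.2 = E}).isModel (O₁₇ n) :=
    Wmod_isModel n (fun x _ => Or.inl (Set.mem_univ x)) (Or.inr rfl)
  have hroot : E ∈ (Wmod Set.univ Set.univ ∅ {p | p.2 = E}).interp
      (.ex 0 (.conj (.name 0) E)) := by
    refine ⟨E, ?_, Set.mem_univ E, omega_W1 n k E hE _ _ _ _⟩
    show ((E, E) : Concept ℕ ℕ × Concept ℕ ℕ) ∈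
      (Wmod Set.univ Set.univ ∅ {p | p.2 = E}).rI 0
    exact rfl
  obtain ⟨y, hy1, _, hy2⟩ := h _ hmod hroot
  have hyE : y = E := hy1
  rw [hyE] at hy2
  exact hne (omega_W2 n k E hE E' hE' _ _ _ _ hy2)

end Src
section Sub
variable {Cn R : Type}

theorem sub_self (c : Concept Cn R) : c ∈ c.sub := by
  cases c <;> simp [Concept.sub]

theorem sub_trans : ∀ c : Concept Cn R, ∀ d ∈ c.sub, d.sub ⊆ c.sub := by
  intro c
  induction c with
  | top => intro d hd; rw [Set.mem_singleton_iff.mp hd]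
  | bot => intro d hd; rw [Set.mem_singleton_iff.mp hd]
  | name A => intro d hd; rw [Set.mem_singleton_iff.mp hd]
  | neg a ih =>
    intro d hd
    rcases hd with rfl | hd
    · exact subset_rfl
    · exact (ih d hd).trans (Set.subset_insert _ _)
  | conj a b iha ihb =>
    intro d hd
    rcases hd with rfl | hd | hd
    · exact subset_rfl
    · exact (iha d hd).trans ((Set.subset_union_left).trans (Set.subset_insert _ _))
    · exact (ihb d hd).trans ((Set.subset_union_right).trans (Set.subset_insert _ _))
  | disj a b iha ihb =>
    intro d hd
    rcases hd with rfl | hd | hd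
    · exact subset_rfl
    · exact (iha d hd).trans ((Set.subset_union_left).trans (Set.subset_insert _ _))
    · exact (ihb d hd).trans ((Set.subset_union_right).trans (Set.subset_insert _ _))
  | ex r a ih =>
    intro d hd
    rcases hd with rfl | hd
    · exact subset_rfl
    · exact (ih d hd).trans (Set.subset_insert _ _)
  | all r a ih =>
    intro d hd
    rcases hd with rfl | hd
    · exact subset_rfl
    · exact (ih d hd).trans (Set.subset_insert _ _)

theorem ex_mem_sub_roles {s : R} {d : Concept Cn R} :
    ∀ c : Concept Cn R, Concept.ex s d ∈ c.sub → s ∈ c.roles := by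
  intro c
  induction c with
  | top => intro h; simp [Concept.sub] at h
  | bot => intro h; simp [Concept.sub] at h
  | name A => intro h; simp [Concept.sub] at h
  | neg a ih =>
    intro h
    rcases h with h | h
    · cases h
    · exact ih h
  | conj a b iha ihb =>
    intro h
    rcases h with h | h | h
    · cases h
    · exact Or.inl (iha h)
    · exact Or.inr (ihb h)
  | disj a b iha ihb =>
    intro h
    rcases h with h | h | h
    · cases h
    · exact Or.inl (iha h)
    · exact Or.inr (ihb h)
  | ex r a ih =>
    intro h
    rcases h with h | h
    · cases h; exact Set.mem_insert _ _
    · exact Set.mem_insert_iff.mpr (Or.inr (ih h))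
  | all r a ih =>
    intro h
    rcases h with h | h
    · cases h
    · exact Set.mem_insert_iff.mpr (Or.inr (ih h))

attribute [local instance] Classical.propDecidable

/-- the set of subconcepts, as a `Finset`. -/
noncomputable def finsub : Concept Cn R → Finset (Concept Cn R)
  | .top => {.top}
  | .bot => {.bot}
  | .name A => {.name A}
  | .neg c => insert (.neg c) (finsub c)
  | .conj c d => insert (.conj c d) (finsub c ∪ finsub d)
  | .disj c d => insert (.disj c d) (finsub c ∪ finsub d)
  | .ex r c => insert (.ex r c) (finsub c)
  | .all r c => insert (.all r c) (finsub c)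

theorem coe_finsub : ∀ c : Concept Cn R, (finsub c : Set (Concept Cn R)) = c.sub := by
  intro c
  induction c with
  | top => simp [finsub, Concept.sub]
  | bot => simp [finsub, Concept.sub]
  | name A => simp [finsub, Concept.sub]
  | neg a ih => simp [finsub, Concept.sub, ih]
  | conj a b iha ihb => simp [finsub, Concept.sub, iha, ihb]
  | disj a b iha ihb => simp [finsub, Concept.sub, iha, ihb]
  | ex r a ih => simp [finsub, Concept.sub, ih]
  | all r a ih => simp [finsub, Concept.sub, ih]

theorem card_finsub_le : ∀ c : Concept Cn R, (finsub c).card ≤ c.size := by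
  intro c
  induction c with
  | top => simp [finsub, Concept.size]
  | bot => simp [finsub, Concept.size]
  | name A => simp [finsub, Concept.size]
  | neg a ih =>
    calc (finsub (Concept.neg a)).card ≤ (finsub a).card + 1 := by
          rw [finsub]; exact Finset.card_insert_le _ _
      _ ≤ a.size + 1 := by omega
  | conj a b iha ihb =>
    calc (finsub (Concept.conj a b)).card ≤ (finsub a ∪ finsub b).card + 1 := by
          rw [finsub]; exact Finset.card_insert_le _ _
      _ ≤ (finsub a).card + (finsub b).card + 1 := by
          have := Finset.card_union_le (finsub a) (finsub b); omega
      _ ≤ a.size + b.size + 1 := by omega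
  | disj a b iha ihb =>
    calc (finsub (Concept.disj a b)).card ≤ (finsub a ∪ finsub b).card + 1 := by
          rw [finsub]; exact Finset.card_insert_le _ _
      _ ≤ (finsub a).card + (finsub b).card + 1 := by
          have := Finset.card_union_le (finsub a) (finsub b); omega
      _ ≤ a.size + b.size + 1 := by omega
  | ex r a ih =>
    calc (finsub (Concept.ex r a)).card ≤ (finsub a).card + 1 := by
          rw [finsub]; exact Finset.card_insert_le _ _
      _ ≤ a.size + 2 := by omega
  | all r a ih =>
    calc (finsub (Concept.all r a)).card ≤ (finsub a).card + 1 := by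
          rw [finsub]; exact Finset.card_insert_le _ _
      _ ≤ a.size + 2 := by omega

theorem subO_closed {O : Ontology Cn R} {c : Concept Cn R} (h : c ∈ subO O) :
    c.sub ⊆ subO O := by
  obtain ⟨ci, hci, hc⟩ := h
  intro d hd
  rcases hc with hc | hc
  · exact ⟨ci, hci, Or.inl (sub_trans _ _ hc hd)⟩
  · exact ⟨ci, hci, Or.inr (sub_trans _ _ hc hd)⟩

end Sub
section Rename
variable {Cn Cn' R R' : Type} {f : Cn → Cn'} {g : R → R'}

theorem rename_isEL : ∀ c : Concept Cn R, c.isEL → (c.rename f g).isEL := by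
  intro c
  induction c with
  | top => intro _; trivial
  | bot => intro h; exact h
  | name A => intro _; trivial
  | neg a ih => intro h; exact h
  | conj a b iha ihb => intro h; exact ⟨iha h.1, ihb h.2⟩
  | disj a b iha ihb => intro h; exact h.elim
  | ex r a ih => intro h; exact ih h
  | all r a ih => intro h; exact h

theorem rename_roles : ∀ c : Concept Cn R, ∀ s ∈ (c.rename f g).roles,
    ∃ t ∈ c.roles, s = g t := by
  intro c
  induction c with
  | top => intro s hs; exact absurd hs (Set.notMem_empty s)
  | bot => intro s hs; exact absurd hs (Set.notMem_empty s)
  | name A => intro s hs; exact absurd hs (Set.notMem_empty s)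
  | neg a ih => exact ih
  | conj a b iha ihb =>
    intro s hs
    rcases hs with hs | hs
    · obtain ⟨t, ht, rfl⟩ := iha s hs
      exact ⟨t, Or.inl ht, rfl⟩
    · obtain ⟨t, ht, rfl⟩ := ihb s hs
      exact ⟨t, Or.inr ht, rfl⟩
  | disj a b iha ihb =>
    intro s hs
    rcases hs with hs | hs
    · obtain ⟨t, ht, rfl⟩ := iha s hs
      exact ⟨t, Or.inl ht, rfl⟩
    · obtain ⟨t, ht, rfl⟩ := ihb s hs
      exact ⟨t, Or.inr ht, rfl⟩
  | ex r a ih =>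
    intro s hs
    rcases hs with hs | hs
    · exact ⟨r, Set.mem_insert _ _, hs⟩
    · obtain ⟨t, ht, rfl⟩ := ih s hs
      exact ⟨t, Set.mem_insert_iff.mpr (Or.inr ht), rfl⟩
  | all r a ih =>
    intro s hs
    rcases hs with hs | hs
    · exact ⟨r, Set.mem_insert _ _, hs⟩
    · obtain ⟨t, ht, rfl⟩ := ih s hs
      exact ⟨t, Set.mem_insert_iff.mpr (Or.inr ht), rfl⟩

end Rename

section Canon
variable {N ρ : Type}

/-- the canonical model of an `EL` ontology, with successors restricted to `S`. -/
def canon (OT : Ontology N ρ) (S : Set (Concept N ρ)) : Interp N ρ where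
  Dom := Concept N ρ
  cI A := {D | entails OT D (.name A)}
  rI s := {p | entails OT p.1 (.ex s p.2) ∧ Concept.ex s p.2 ∈ S}

/-- soundness of the canonical model. -/
theorem canon_sound {OT : Ontology N ρ} {S : Set (Concept N ρ)} :
    ∀ G : Concept N ρ, G.isEL → ∀ D : Concept N ρ,
    D ∈ (canon OT S).interp G → entails OT D G := by
  intro G
  induction G with
  | top => intro _ D _; intro I hI x hx; trivial
  | bot => intro h; exact h.elim
  | name A => intro _ D hD; exact hD
  | neg a ih => intro h; exact h.elim
  | conj a b iha ihb =>
    intro hEL D hD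
    exact entails_conj_intro (iha hEL.1 D hD.1) (ihb hEL.2 D hD.2)
  | disj a b iha ihb => intro h; exact h.elim
  | ex r a ih =>
    intro hEL D hD
    obtain ⟨D', ⟨hent, _⟩, hD'⟩ := hD
    exact entails_trans hent (entails_ex_mono r (ih hEL D' hD'))
  | all r a ih => intro h; exact h.elim

/-- completeness of the canonical model, for concepts in the closed set `S`. -/
theorem canon_complete {OT : Ontology N ρ} {S : Set (Concept N ρ)}
    (hcl : ∀ c ∈ S, c.sub ⊆ S) :
    ∀ G : Concept N ρ, G.isEL → G ∈ S → ∀ D : Concept N ρ,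
    entails OT D G → D ∈ (canon OT S).interp G := by
  intro G
  induction G with
  | top => intro _ _ D _; trivial
  | bot => intro h; exact h.elim
  | name A => intro _ _ D hD; exact hD
  | neg a ih => intro h; exact h.elim
  | conj a b iha ihb =>
    intro hEL hGS D hD
    have haS : a ∈ S := hcl _ hGS (Set.mem_insert_iff.mpr (Or.inr (Or.inl (sub_self a))))
    have hbS : b ∈ S := hcl _ hGS (Set.mem_insert_iff.mpr (Or.inr (Or.inr (sub_self b))))
    exact ⟨iha hEL.1 haS D (entails_trans hD (entails_conj_elim_l _ _ _)),
      ihb hEL.2 hbS D (entails_trans hD (entails_conj_elim_r _ _ _))⟩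
  | disj a b iha ihb => intro h; exact h.elim
  | ex r a ih =>
    intro hEL hGS D hD
    have haS : a ∈ S := hcl _ hGS (Set.mem_insert_iff.mpr (Or.inr (sub_self a)))
    refine ⟨a, ⟨hD, hGS⟩, ih hEL haS a (entails_refl OT a)⟩
  | all r a ih => intro h; exact h.elim

/-- the canonical model is a model of `OT`. -/
theorem canon_isModel {OT : Ontology N ρ} {S : Set (Concept N ρ)}
    (hcl : ∀ c ∈ S, c.sub ⊆ S)
    (hEL : ∀ ci ∈ OT, ci.1.isEL ∧ ci.2.isEL)
    (hax : ∀ ci ∈ OT, ci.2 ∈ S) :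
    (canon OT S).isModel OT := by
  intro ci hci x hx
  have h1 : entails OT x ci.1 := canon_sound ci.1 (hEL ci hci).1 x hx
  have h2 : entails OT ci.1 ci.2 := fun I hI => hI ci hci
  exact canon_complete hcl ci.2 (hEL ci hci).2 (hax ci hci) x (entails_trans h1 h2)

end Canon
section Cond

theorem omega_conj_cond (n k m : ℕ) (hm : m < 4) {E : Concept ℕ ℕ} (hE : E ∈ OmegaF n k) :
    (Concept.conj (.name m) E).isEL ∧ (Concept.conj (.name m) E).names ⊆ srcNames n ∧
    (Concept.conj (.name m) E).roles ⊆ srcRoles ∧ (Concept.conj (.name m) E).depth ≤ k := by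
  refine ⟨⟨trivial, omega_isEL n k E hE⟩, ?_, ?_, ?_⟩
  · intro A hA
    rcases hA with hA | hA
    · have : A = m := hA
      show A < 4 + 2 * n
      omega
    · have := omega_names n k E hE A hA
      show A < 4 + 2 * n
      omega
  · intro s hs
    rcases hs with hs | hs
    · exact absurd hs (Set.notMem_empty s)
    · rcases omega_roles n k E hE s hs with rfl | rfl
      · exact Or.inr (Or.inl rfl)
      · exact Or.inr (Or.inr rfl)
  · show max (Concept.name m : Concept ℕ ℕ).depth E.depth ≤ k
    have := omega_depth n k E hE
    have h0 : (Concept.name m : Concept ℕ ℕ).depth = 0 := rfl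
    omega

theorem omega_ex_cond (n k m : ℕ) (hm : m < 4) {E : Concept ℕ ℕ} (hE : E ∈ OmegaF n k) :
    (Concept.ex 0 (.conj (.name m) E)).isEL ∧
    (Concept.ex 0 (.conj (.name m) E)).names ⊆ srcNames n ∧
    (Concept.ex 0 (.conj (.name m) E)).roles ⊆ srcRoles ∧
    (Concept.ex 0 (.conj (.name m) E)).depth ≤ k + 1 := by
  obtain ⟨h1, h2, h3, h4⟩ := omega_conj_cond n k m hm hE
  refine ⟨h1, h2, ?_, ?_⟩
  · intro s hs
    rcases hs with hs | hs
    · exact Or.inl hs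
    · exact h3 hs
  · show (Concept.conj (.name m) E).depth + 1 ≤ k + 1
    omega

theorem name_cond (n m : ℕ) (hm : m < 4) :
    (Concept.name m : Concept ℕ ℕ).isEL ∧ (Concept.name m : Concept ℕ ℕ).names ⊆ srcNames n ∧
    (Concept.name m : Concept ℕ ℕ).roles ⊆ srcRoles ∧
    (Concept.name m : Concept ℕ ℕ).depth = 0 := by
  refine ⟨trivial, ?_, ?_, rfl⟩
  · intro A hA
    have : A = m := hA
    show A < 4 + 2 * n
    omega
  · intro s hs
    exact absurd hs (Set.notMem_empty s)

end Cond
theorem stmt17 (n ℓ : ℕ) (hn : 1 ≤ n) (hℓ : 1 ≤ ℓ)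
    {N ρ : Type} (eN : ℕ → N) (eR : ℕ → ρ)
    (hiN : Function.Injective eN) (hiR : Function.Injective eR)
    (OT : Set (Concept N ρ × Concept N ρ)) (hfin : OT.Finite)
    (hEL : ∀ ci ∈ OT, ci.1.isEL ∧ ci.2.isEL)
    (happrox : ∀ C D : Concept ℕ ℕ, C.isEL → D.isEL →
      C.names ⊆ srcNames n → D.names ⊆ srcNames n →
      C.roles ⊆ srcRoles → D.roles ⊆ srcRoles →
      C.depth ≤ ℓ → D.depth ≤ ℓ →
      (entails (O₁₇ n) C D ↔ entails OT (C.rename eN eR) (D.rename eN eR))) :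
    tower ℓ n ≤ hfin.toFinset.sum fun ci => ci.1.size + ci.2.size := by
  classical
  set k := ℓ - 1 with hkdef
  have hk1 : k + 1 = ℓ := by omega
  -- key decomposition: each E ∈ Ω yields a distinct subconcept of OT
  have key : ∀ E ∈ OmegaF n k, ∃ D' : Concept N ρ,
      Concept.ex (eR 0) D' ∈ subO OT ∧
      entails OT (Concept.rename eN eR (.ex 0 (.conj (.name 0) E))) (.ex (eR 0) D') ∧
      entails OT D' (Concept.rename eN eR (.conj (.name 1) E)) := by
    intro E hE
    obtain ⟨hCEL, hCnames, hCroles, hCdepth⟩ := omega_ex_cond n k 0 (by omega) hE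
    obtain ⟨hDEL, hDnames, hDroles, hDdepth⟩ := omega_ex_cond n k 1 (by omega) hE
    have hpos := (happrox _ _ hCEL hDEL hCnames hDnames hCroles hDroles
      (by omega) (by omega)).mp (src_pos n k E hE)
    set Cq := Concept.rename eN eR (.ex 0 (.conj (.name 0) E)) with hCq
    set S := subO OT ∪ Cq.sub with hS
    have hcl : ∀ c ∈ S, c.sub ⊆ S := by
      intro c hc
      rcases hc with hc | hc
      · exact fun d hd => Or.inl (subO_closed hc hd)
      · exact fun d hd => Or.inr (sub_trans _ _ hc hd)
    have hax : ∀ ci ∈ OT, ci.2 ∈ S := fun ci hci => Or.inl ⟨ci, hci, Or.inr (sub_self _)⟩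
    have hmod := canon_isModel hcl hEL hax
    have hCqEL : Cq.isEL := rename_isEL _ hCEL
    have hCqS : Cq ∈ S := Or.inr (sub_self _)
    have hCqmem : Cq ∈ (canon OT S).interp Cq :=
      canon_complete hcl Cq hCqEL hCqS Cq (entails_refl OT Cq)
    have hDqmem := hpos _ hmod hCqmem
    obtain ⟨D', ⟨hent, hmemS⟩, hD'⟩ := hDqmem
    have hconjEL : (Concept.conj (.name 1) E : Concept ℕ ℕ).isEL := ⟨trivial, omega_isEL n k E hE⟩
    have hD'ent : entails OT D' (Concept.rename eN eR (.conj (.name 1) E)) :=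
      canon_sound _ (rename_isEL _ hconjEL) D' hD'
    rcases hmemS with hmemS | hmemS
    · exact ⟨D', hmemS, hent, hD'ent⟩
    · exfalso
      have hmemS' : Concept.ex (eR 0) D' ∈
          insert Cq (Concept.rename eN eR (.conj (.name 0) E)).sub := hmemS
      rcases hmemS' with heq | hmemS'
      · -- the witness is the query concept itself: contradicts O ⊭ A ⊓ E ⊑ B₁
        have hD'eq : D' = Concept.rename eN eR (.conj (.name 0) E) := by
          have : Concept.ex (eR 0) D' =
              Concept.ex (eR 0) (Concept.rename eN eR (.conj (.name 0) E)) := heq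
          injection this
        have hent2 : entails OT (Concept.rename eN eR (.conj (.name 0) E))
            (Concept.rename eN eR (.name 1)) :=
          entails_trans (hD'eq ▸ hD'ent) (entails_conj_elim_l _ _ _)
        obtain ⟨hc1, hc2, hc3, hc4⟩ := omega_conj_cond n k 0 (by omega) hE
        obtain ⟨hn1, hn2, hn3, hn4⟩ := name_cond n 1 (by omega)
        exact src_negB n k E hE
          ((happrox _ _ hc1 hn1 hc2 hn2 hc3 hn3 (by omega) (by omega)).mpr hent2)
      · -- the witness sits inside the renamed query: impossible for role reasons
        have h0 : eR 0 ∈ (Concept.rename eN eR (.conj (.name 0) E)).roles :=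
          ex_mem_sub_roles _ hmemS'
        obtain ⟨t, ht, hteq⟩ := rename_roles _ _ h0
        have ht0 : (0 : ℕ) = t := hiR hteq
        rcases ht with ht | ht
        · exact absurd ht (Set.notMem_empty t)
        · rcases omega_roles n k E hE t ht with rfl | rfl <;> omega
  choose D' hsub hent1 hent2 using key
  have hmaps : ∀ E ∈ OmegaF n k,
      (if h : E ∈ OmegaF n k then Concept.ex (eR 0) (D' E h) else Concept.top) ∈
        hfin.toFinset.biUnion (fun ci => finsub ci.1 ∪ finsub ci.2) := by
    intro E hE
    rw [dif_pos hE]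
    obtain ⟨ci, hci, hc⟩ := hsub E hE
    refine Finset.mem_biUnion.mpr ⟨ci, hfin.mem_toFinset.mpr hci, ?_⟩
    rcases hc with hc | hc
    · exact Finset.mem_union_left _ (by rw [← Finset.mem_coe, coe_finsub]; exact hc)
    · exact Finset.mem_union_right _ (by rw [← Finset.mem_coe, coe_finsub]; exact hc)
  have hinj : Set.InjOn
      (fun E => if h : E ∈ OmegaF n k then Concept.ex (eR 0) (D' E h) else Concept.top)
      ↑(OmegaF n k) := by
    intro E hE E' hE' hFF
    rw [Finset.mem_coe] at hE hE'
    by_contra hne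
    simp only [dif_pos hE, dif_pos hE'] at hFF
    have hD'eq : D' E hE = D' E' hE' := by injection hFF
    have hcomp : entails OT (Concept.rename eN eR (.ex 0 (.conj (.name 0) E)))
        (Concept.rename eN eR (.ex 0 (.conj (.name 1) E'))) := by
      refine entails_trans (hent1 E hE) ?_
      rw [hD'eq]
      exact entails_ex_mono _ (hent2 E' hE')
    obtain ⟨hc1, hc2, hc3, hc4⟩ := omega_ex_cond n k 0 (by omega) hE
    obtain ⟨hd1, hd2, hd3, hd4⟩ := omega_ex_cond n k 1 (by omega) hE'
    exact src_negE n k E E' hE hE' hne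
      ((happrox _ _ hc1 hd1 hc2 hd2 hc3 hd3 (by omega) (by omega)).mpr hcomp)
  calc tower ℓ n = (OmegaF n k).card := by rw [omega_card n k, hk1]
    _ ≤ (hfin.toFinset.biUnion (fun ci => finsub ci.1 ∪ finsub ci.2)).card :=
        Finset.card_le_card_of_injOn _ hmaps hinj
    _ ≤ ∑ ci ∈ hfin.toFinset, (finsub ci.1 ∪ finsub ci.2).card := Finset.card_biUnion_le
    _ ≤ ∑ ci ∈ hfin.toFinset, (ci.1.size + ci.2.size) := by
        refine Finset.sum_le_sum fun ci _ => ?_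
        have h1 := card_finsub_le ci.1
        have h2 := card_finsub_le ci.2
        have h3 := Finset.card_union_le (finsub ci.1) (finsub ci.2)
        omega
end DL
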